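/- Let n ≥ 2, let Λ₁, Λ₂ ⊂ ℝⁿ with Λ_k convex, and let Φ₁, Φ₂ : ℝⁿ → ℝ be C² on neighbourhoods of Λ₁, Λ₂ with sup_{Λ_k}|∇Φ_k| and ‖∇²Φ_k‖_{L^∞(Λ_k)} finite. Suppose condition (A1) holds with constant D₁ > 0: for every {j,k} = {1,2}, every 𝔥 ∈ ℝ × ℝⁿ, all ξ, ξ' ∈ Σ_j(𝔥), and every η ∈ Λ_k, |(∇Φ_j(ξ) − ∇Φ_j(ξ')) ∧ (∇Φ_j(ξ) − ∇Φ_k(η))| ≥ D₁|ξ − ξ'|; and suppose in addition the transversality bound ‖∇²Φ_k‖_{L^∞(Λ_k)} · |∇Φ_k(ξ) − ∇Φ_j(η)| ≥ D₁ for all ξ ∈ Σ_k(𝔥) and η ∈ Λ_j. Fix 𝔥 ∈ ℝ × ℝⁿ and {j,k} = {1,2}, and define the conic hypersurface 𝒞_k(𝔥) := {(r, −r ∇Φ_k(ξ)) ∈ ℝ^{1+n} : r ∈ ℝ, ξ ∈ Σ_k(𝔥)}. Then for every η ∈ Λ_j and all p, q ∈ 𝒞_k(𝔥), (1 + sup_{Λ_k}|∇Φ_k|)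 · ‖∇²Φ_k‖_{L^∞(Λ_k)} · |(p − q) ∧ (1, −∇Φ_j(η))| ≥ D₁ |p − q|. -/

import Mathlib

open MeasureTheory Filter
open scoped ENNReal RealInnerProductSpace FourierTransform

noncomputable section

abbrev Euc (n : ℕ) : Type := EuclideanSpace ℝ (Fin n)

/-- The wedge (cross-product magnitude) `|x ∧ y| = (|x|²|y|² − (x·y)²)^{1/2}`. -/
def wedge {F : Type*} [NormedAddCommGroup F] [InnerProductSpace ℝ F] (x y : F) : ℝ :=
  Real.sqrt (‖x‖ ^ 2 * ‖y‖ ^ 2 - ⟪x, y⟫ ^ 2)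

/-- The surface `Σ_j(𝔥) = {ξ ∈ Λ_j ∩ (Λ_k + h) : Φ_j(ξ) = Φ_k(ξ − h) + a}`. -/
def SigmaSet {n : ℕ} (Λj Λk : Set (Euc n)) (Φj Φk : Euc n → ℝ) (a : ℝ) (h : Euc n) :
    Set (Euc n) :=
  {ξ | ξ ∈ Λj ∧ ξ - h ∈ Λk ∧ Φj ξ = Φk (ξ - h) + a}

/-- Condition (A1) for the ordered pair `(j, k)`. -/
def CondA1 {n : ℕ} (Λj Λk : Set (Euc n)) (Φj Φk : Euc n → ℝ) (D₁ : ℝ) : Prop :=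
  ∀ (a : ℝ) (h : Euc n), ∀ ξ ∈ SigmaSet Λj Λk Φj Φk a h, ∀ ξ' ∈ SigmaSet Λj Λk Φj Φk a h,
    ∀ η ∈ Λk,
      D₁ * ‖ξ - ξ'‖ ≤
        wedge (gradient Φj ξ - gradient Φj ξ') (gradient Φj ξ - gradient Φk η)

/-- Condition (A2): `Φ` is `C^N` on a neighbourhood of `Λ` with all derivatives of order
`1 ≤ i ≤ N` bounded by `D₂` on `Λ`. -/
def CondA2 {n : ℕ} (N : ℕ) (Λ : Set (Euc n)) (Φ : Euc n → ℝ) (D₂ : ℝ) : Prop :=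
  ∃ U : Set (Euc n), IsOpen U ∧ Λ ⊆ U ∧ ContDiffOn ℝ N Φ U ∧
    ∀ i : ℕ, 1 ≤ i → i ≤ N → ∀ ξ ∈ Λ, ‖iteratedFDeriv ℝ i Φ ξ‖ ≤ D₂

/-- Assumption A on `(Λ₁, Λ₂)` with constants `D₁, D₂, N`. -/
def AssumptionA {n : ℕ} (N : ℕ) (D₁ D₂ : ℝ) (Λ₁ Λ₂ : Set (Euc n)) (Φ₁ Φ₂ : Euc n → ℝ) :
    Prop :=
  CondA1 Λ₁ Λ₂ Φ₁ Φ₂ D₁ ∧ CondA1 Λ₂ Λ₁ Φ₂ Φ₁ D₁ ∧ CondA2 N Λ₁ Φ₁ D₂ ∧ CondA2 N Λ₂ Φ₂ D₂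

/-- The annulus `{1/16 ≤ |ξ| ≤ 16}`. -/
def Annulus (n : ℕ) : Set (Euc n) := {ξ | 1 / 16 ≤ ‖ξ‖ ∧ ‖ξ‖ ≤ 16}

/-- The vector `(r, w) ∈ ℝ^{1+n}` with the Euclidean (`L²`) norm. -/
def mk1 {n : ℕ} (r : ℝ) (w : Euc n) : WithLp 2 (ℝ × Euc n) :=
  (WithLp.equiv 2 (ℝ × Euc n)).symm (r, w)

lemma wedge_nonneg {F : Type*} [NormedAddCommGroup F] [InnerProductSpace ℝ F] (x y : F) :
    0 ≤ wedge x y := Real.sqrt_nonneg _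

/-- Shear invariance of the wedge in the second argument. -/
lemma wedge_shear {F : Type*} [NormedAddCommGroup F] [InnerProductSpace ℝ F] (x y : F) (t : ℝ) :
    wedge x (y + t • x) = wedge x y := by
  unfold wedge
  congr 1
  simp only [← real_inner_self_eq_norm_sq, inner_add_left, inner_add_right,
    real_inner_smul_left, real_inner_smul_right, real_inner_comm y x]
  ring

lemma wedge_le {F : Type*} [NormedAddCommGroup F] [InnerProductSpace ℝ F] (x y : F) :
    wedge x y ≤ ‖x‖ * ‖y‖ := by
  have h : ‖x‖ ^ 2 * ‖y‖ ^ 2 - ⟪x, y⟫ ^ 2 ≤ (‖x‖ * ‖y‖) ^ 2 := by nlinarith [sq_nonneg ⟪x, y⟫]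
  calc wedge x y ≤ Real.sqrt ((‖x‖ * ‖y‖) ^ 2) := Real.sqrt_le_sqrt h
    _ = ‖x‖ * ‖y‖ := Real.sqrt_sq (mul_nonneg (norm_nonneg x) (norm_nonneg y))

/-- Lower bound for the wedge via the distance of `y` to the line `ℝx`. -/
lemma le_wedge {F : Type*} [NormedAddCommGroup F] [InnerProductSpace ℝ F] {x y : F} {c : ℝ}
    (hc : 0 ≤ c) (hx : x ≠ 0) (hbound : ∀ t : ℝ, c ≤ ‖y - t • x‖) :
    c * ‖x‖ ≤ wedge x y := by
  have hx2 : (0:ℝ) < ‖x‖ ^ 2 := pow_pos (norm_pos_iff.mpr hx) 2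
  set t : ℝ := ⟪x, y⟫ / ‖x‖ ^ 2 with ht
  have hexp : ‖y - t • x‖ ^ 2 = ‖y‖ ^ 2 - 2 * (t * ⟪x, y⟫) + t ^ 2 * ‖x‖ ^ 2 := by
    simp only [← real_inner_self_eq_norm_sq, inner_sub_left, inner_sub_right,
      real_inner_smul_left, real_inner_smul_right, real_inner_comm y x]
    ring
  have hid : ‖x‖ ^ 2 * ‖y‖ ^ 2 - ⟪x, y⟫ ^ 2 = ‖x‖ ^ 2 * ‖y - t • x‖ ^ 2 := by
    rw [hexp, ht]
    field_simp
    ring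
  have h1 : c ≤ ‖y - t • x‖ := hbound t
  have : (c * ‖x‖) ^ 2 ≤ ‖x‖ ^ 2 * ‖y - t • x‖ ^ 2 := by
    nlinarith [mul_self_le_mul_self hc h1, sq_nonneg ‖x‖]
  calc c * ‖x‖ = Real.sqrt ((c * ‖x‖) ^ 2) :=
      (Real.sqrt_sq (mul_nonneg hc (norm_nonneg x))).symm
    _ ≤ Real.sqrt (‖x‖ ^ 2 * ‖y - t • x‖ ^ 2) := Real.sqrt_le_sqrt this
    _ = wedge x y := by rw [wedge, hid]

lemma mk1_norm_sq {n : ℕ} (r : ℝ) (w : Euc n) : ‖mk1 r w‖ ^ 2 = r ^ 2 + ‖w‖ ^ 2 := by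
  rw [mk1, WithLp.prod_norm_sq_eq_of_L2]
  simp [Real.norm_eq_abs, sq_abs]

set_option maxHeartbeats 1000000 in
theorem stmt10 {n : ℕ} (hn : 2 ≤ n) (Λ₁ Λ₂ : Set (Euc n)) (hc₂ : Convex ℝ Λ₂)
    (Φ₁ Φ₂ : Euc n → ℝ)
    (hU₁ : ∃ U : Set (Euc n), IsOpen U ∧ Λ₁ ⊆ U ∧ ContDiffOn ℝ 2 Φ₁ U)
    (hU₂ : ∃ U : Set (Euc n), IsOpen U ∧ Λ₂ ⊆ U ∧ ContDiffOn ℝ 2 Φ₂ U)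
    (G₂ H₂ : ℝ)
    (hG₂ : ∀ ξ ∈ Λ₂, ‖gradient Φ₂ ξ‖ ≤ G₂)
    (hH₂ : ∀ ξ ∈ Λ₂, ‖fderiv ℝ (gradient Φ₂) ξ‖ ≤ H₂)
    (D₁ : ℝ) (hD₁ : 0 < D₁)
    (hA1 : CondA1 Λ₁ Λ₂ Φ₁ Φ₂ D₁) (hA1' : CondA1 Λ₂ Λ₁ Φ₂ Φ₁ D₁)
    (htrans : ∀ (a : ℝ) (h : Euc n), ∀ ξ ∈ SigmaSet Λ₂ Λ₁ Φ₂ Φ₁ a h, ∀ η ∈ Λ₁,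
      D₁ ≤ H₂ * ‖gradient Φ₂ ξ - gradient Φ₁ η‖)
    (a : ℝ) (h : Euc n) :
    ∀ η ∈ Λ₁, ∀ (r r' : ℝ) (ξ ξ' : Euc n),
      ξ ∈ SigmaSet Λ₂ Λ₁ Φ₂ Φ₁ a h → ξ' ∈ SigmaSet Λ₂ Λ₁ Φ₂ Φ₁ a h →
      D₁ * ‖mk1 r (-(r • gradient Φ₂ ξ)) - mk1 r' (-(r' • gradient Φ₂ ξ'))‖ ≤
        (1 + G₂) * H₂ *
          wedge (mk1 r (-(r • gradient Φ₂ ξ)) - mk1 r' (-(r' • gradient Φ₂ ξ')))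
            (mk1 1 (-(gradient Φ₁ η))) := by
  obtain ⟨U, hUo, hUsub, hUcd⟩ := hU₂
  intro η hη r r' ξ ξ' hξ hξ'
  set g : Euc n := gradient Φ₂ ξ with hgdef
  set g' : Euc n := gradient Φ₂ ξ' with hg'def
  set w : Euc n := gradient Φ₁ η with hwdef
  have hG0 : (0:ℝ) ≤ G₂ := le_trans (norm_nonneg _) (hG₂ ξ hξ.1)
  have hκα : D₁ ≤ H₂ * ‖g - w‖ := htrans a h ξ hξ η hη
  have hH0 : 0 < H₂ := by
    by_contra hcon
    push_neg at hcon
    nlinarith [mul_nonneg (neg_nonneg.mpr hcon) (norm_nonneg (g - w))]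
  -- Lipschitz bound for the gradient on the convex set Λ₂
  have hgraddiff : ∀ x ∈ Λ₂, HasFDerivWithinAt (gradient Φ₂) (fderiv ℝ (gradient Φ₂) x) Λ₂ x := by
    intro x hx
    have h1 : ContDiffOn ℝ 1 (fderiv ℝ Φ₂) U := hUcd.fderiv_of_isOpen hUo (by norm_num)
    have h2 : DifferentiableAt ℝ (fderiv ℝ Φ₂) x :=
      (h1.differentiableOn one_ne_zero).differentiableAt (hUo.mem_nhds (hUsub hx))
    have h3 : DifferentiableAt ℝ (gradient Φ₂) x := by
      have : gradient Φ₂ =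
          fun y => (InnerProductSpace.toDual ℝ (Euc n)).symm (fderiv ℝ Φ₂ y) := rfl
      rw [this]
      exact ((InnerProductSpace.toDual ℝ (Euc n)).symm.differentiable.differentiableAt).comp x h2
    exact h3.hasFDerivAt.hasFDerivWithinAt
  have hlip : ‖g - g'‖ ≤ H₂ * ‖ξ - ξ'‖ :=
    hc₂.norm_image_sub_le_of_norm_hasFDerivWithin_le hgraddiff hH₂ hξ'.1 hξ.1
  -- key geometric fact: the line ℝ(g - g') stays at distance ≥ D₁/H₂ from g - w
  have hS1 : ∀ t : ℝ, D₁ ≤ H₂ * ‖(g - w) + t • (g - g')‖ := by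
    intro t
    by_cases hδ : g - g' = 0
    · rw [hδ, smul_zero, add_zero]; exact hκα
    · have hδpos : 0 < ‖g - g'‖ := norm_pos_iff.mpr hδ
      have hw : D₁ * ‖ξ - ξ'‖ ≤ wedge (g - g') (g - w) := hA1' a h ξ hξ ξ' hξ' η hη
      have key : D₁ * ‖g - g'‖ ≤ (H₂ * ‖(g - w) + t • (g - g')‖) * ‖g - g'‖ := by
        calc D₁ * ‖g - g'‖ ≤ D₁ * (H₂ * ‖ξ - ξ'‖) :=
              mul_le_mul_of_nonneg_left hlip hD₁.le
          _ = H₂ * (D₁ * ‖ξ - ξ'‖) := by ring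
          _ ≤ H₂ * wedge (g - g') (g - w) := mul_le_mul_of_nonneg_left hw hH0.le
          _ = H₂ * wedge (g - g') ((g - w) + t • (g - g')) := by rw [wedge_shear]
          _ ≤ H₂ * (‖g - g'‖ * ‖(g - w) + t • (g - g')‖) :=
              mul_le_mul_of_nonneg_left (wedge_le _ _) hH0.le
          _ = (H₂ * ‖(g - w) + t • (g - g')‖) * ‖g - g'‖ := by ring
      exact le_of_mul_le_mul_right key hδpos
  -- core transversality bound for arbitrary points of the plane through v spanned by b, b'
  have hcore : ∀ c c' : ℝ, D₁ ≤ (1 + G₂) * H₂ * ‖mk1 (1 + c + c') (-w - c • g - c' • g')‖ := by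
    intro c c'
    have hvec : -w - c • g - c' • g' =
        ((g - w) + (-(1 + c)) • (g - g')) - (1 + c + c') • g' := by module
    have hA : D₁ ≤ H₂ * ‖(g - w) + (-(1 + c)) • (g - g')‖ := hS1 (-(1 + c))
    set A : ℝ := ‖(g - w) + (-(1 + c)) • (g - g')‖ with hAdef
    set p : ℝ := ‖-w - c • g - c' • g'‖ with hpdef
    have htri : A - |1 + c + c'| * G₂ ≤ p := by
      have h1 : ‖(1 + c + c') • g'‖ ≤ |1 + c + c'| * G₂ := by
        rw [norm_smul, Real.norm_eq_abs]
        exact mul_le_mul_of_nonneg_left (hG₂ ξ' hξ'.1) (abs_nonneg _)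
      have h2 : A - ‖(1 + c + c') • g'‖ ≤ p := by
        rw [hpdef, hvec]; exact norm_sub_norm_le _ _
      linarith
    set N : ℝ := ‖mk1 (1 + c + c') (-w - c • g - c' • g')‖ with hNdef
    have hN2 : N ^ 2 = (1 + c + c') ^ 2 + p ^ 2 := mk1_norm_sq _ _
    have hN0 : (0:ℝ) ≤ N := norm_nonneg _
    have hp0 : (0:ℝ) ≤ p := norm_nonneg _
    have habs : (0:ℝ) ≤ |1 + c + c'| := abs_nonneg _
    have hm : |1 + c + c'| ^ 2 = (1 + c + c') ^ 2 := sq_abs _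
    have h2 : (p + |1 + c + c'| * G₂) ^ 2 ≤ ((1 + G₂) * N) ^ 2 := by
      nlinarith [sq_nonneg (|1 + c + c'| - p), mul_nonneg hG0 (sq_nonneg (|1 + c + c'| - p)),
        mul_nonneg (mul_nonneg hG0 hG0) (sq_nonneg p), sq_nonneg (|1 + c + c'| - p * G₂)]
    have h3 : p + |1 + c + c'| * G₂ ≤ (1 + G₂) * N := by
      calc p + |1 + c + c'| * G₂
          = Real.sqrt ((p + |1 + c + c'| * G₂) ^ 2) :=
            (Real.sqrt_sq (by positivity)).symm
        _ ≤ Real.sqrt (((1 + G₂) * N) ^ 2) := Real.sqrt_le_sqrt h2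
        _ = (1 + G₂) * N := Real.sqrt_sq (by positivity)
    calc D₁ ≤ H₂ * A := hA
      _ ≤ H₂ * (p + |1 + c + c'| * G₂) := mul_le_mul_of_nonneg_left (by linarith) hH0.le
      _ ≤ H₂ * ((1 + G₂) * N) := mul_le_mul_of_nonneg_left h3 hH0.le
      _ = (1 + G₂) * H₂ * N := by ring
  -- assemble
  set u : WithLp 2 (ℝ × Euc n) := mk1 r (-(r • g)) - mk1 r' (-(r' • g')) with hudef
  set v : WithLp 2 (ℝ × Euc n) := mk1 1 (-w) with hvdef
  by_cases hu : u = 0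
  · rw [hu, norm_zero, mul_zero]
    exact mul_nonneg (mul_nonneg (by linarith) hH0.le) (wedge_nonneg _ _)
  · have hden : (0:ℝ) < (1 + G₂) * H₂ := mul_pos (by linarith) hH0
    set c₀ : ℝ := D₁ / ((1 + G₂) * H₂) with hc₀def
    have hc₀ : 0 ≤ c₀ := (div_pos hD₁ hden).le
    have hbound : ∀ t : ℝ, c₀ ≤ ‖v - t • u‖ := by
      intro t
      have hz : v - t • u
          = mk1 (1 - t * (r - r')) (-w - t • (-(r • g) - -(r' • g'))) := rfl
      have harg1 : 1 - t * (r - r') = 1 + (-(t * r)) + (t * r') := by ring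
      have harg2 : -w - t • (-(r • g) - -(r' • g'))
          = -w - (-(t * r)) • g - (t * r') • g' := by module
      rw [hz, harg1, harg2, hc₀def, div_le_iff₀ hden]
      have := hcore (-(t * r)) (t * r')
      linarith
    have hmain : c₀ * ‖u‖ ≤ wedge u v := le_wedge hc₀ hu hbound
    have hD : c₀ * ((1 + G₂) * H₂) = D₁ := div_mul_cancel₀ D₁ hden.ne'
    calc D₁ * ‖u‖ = ((1 + G₂) * H₂) * (c₀ * ‖u‖) := by rw [← hD]; ring
      _ ≤ ((1 + G₂) * H₂) * wedge u v := mul_le_mul_of_nonneg_left hmain hden.le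
      _ = (1 + G₂) * H₂ * wedge u v := by ring
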